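/- For every natural number x ≥ 1 and every k ≥ 1, if T^k(x) < x then 3^{m_k(x)} < 2^k. -/

import Mathlib

/-- The 3x+1 map: `T x = x/2` if `x` is even, `(3x+1)/2` if `x` is odd. -/
def T (x : ℕ) : ℕ := if x % 2 = 0 then x / 2 else (3 * x + 1) / 2

/-- `m k x` is the number of indices `s` with `0 ≤ s < k` such that `T^[s] x` is odd. -/
def m (k x : ℕ) : ℕ := ((Finset.range k).filter (fun s => T^[s] x % 2 = 1)).card

lemma key (x k : ℕ) : 3 ^ m k x * x ≤ 2 ^ k * T^[k] x := by
  induction k with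
  | zero => simp [m]
  | succ k ih =>
    have hm : m (k+1) x = m k x + (if T^[k] x % 2 = 1 then 1 else 0) := by
      simp [m, Finset.range_add_one, Finset.filter_insert]
      split <;> simp [Finset.card_insert_of_notMem, Finset.notMem_range_self, *]
    have hit : T^[k+1] x = T (T^[k] x) := Function.iterate_succ_apply' T k x
    set y := T^[k] x with hy
    rcases Nat.even_or_odd y with he | ho
    · have h2 : y % 2 = 0 := Nat.even_iff.mp he
      have hT : 2 * T y = y := by
        simp [T, h2]
        omega
      rw [hm, hit, h2]
      simp only [if_neg (by omega : ¬ (0:ℕ) = 1)]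
      calc 3 ^ (m k x + 0) * x = 3 ^ m k x * x := by ring_nf
        _ ≤ 2 ^ k * y := ih
        _ = 2 ^ (k+1) * T y := by rw [pow_succ, mul_assoc, hT]
    · have h2 : y % 2 = 1 := Nat.odd_iff.mp ho
      have hT : 2 * T y = 3 * y + 1 := by
        simp [T, h2]
        omega
      rw [hm, hit, h2]
      simp only [if_pos rfl]
      calc 3 ^ (m k x + 1) * x = 3 * (3 ^ m k x * x) := by ring
        _ ≤ 3 * (2 ^ k * y) := Nat.mul_le_mul_left 3 ih
        _ ≤ 2 ^ k * (3 * y + 1) := by nlinarith [Nat.one_le_two_pow (n := k)]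
        _ = 2 ^ (k+1) * T y := by rw [pow_succ, mul_assoc, hT]

theorem stmt5 (x k : ℕ) (hx : 1 ≤ x) (hk : 1 ≤ k) (h : T^[k] x < x) :
    3 ^ m k x < 2 ^ k := by
  have h1 := key x k
  have h2 : 2 ^ k * T^[k] x < 2 ^ k * x := by
    have : (0:ℕ) < 2 ^ k := Nat.pow_pos (by norm_num)
    exact Nat.mul_lt_mul_of_le_of_lt (le_refl _) h this
  have : 3 ^ m k x * x < 2 ^ k * x := lt_of_le_of_lt h1 h2
  exact Nat.lt_of_mul_lt_mul_right this
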